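/- Let H = H₀ ⊕ H₁ be an orthogonal decomposition of a finite-dimensional inner product space and let X be a self-adjoint linear operator on H with blocks Xᵢⱼ (i, j = 0, 1). Then the factorization X = [[I, (X₁₁⁺X₁₀)*],[0, I]] · [[X₀₀ − X₀₁X₁₁⁺X₁₀, 0],[0, X₁₁]] · [[I, 0],[X₁₁⁺X₁₀, I]] holds if and only if ker X₁₁ ⊆ ker X₀₁. In particular, if in addition X ≥ 0, then ker X₁₁ ⊆ ker X₀₁ and the factorization holds. -/

import Mathlib

/-- The generalized Schur complement `X₀₀ - X₀₁ X₁₁⁺ X₁₀` of an operator `X` on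
`H = H₀ ⊕ H₁` (orthogonal projections `P0, P1`), where `B` is the Moore–Penrose
pseudoinverse of the block `X₁₁ = P1 X P1`. -/
noncomputable def gschurLM {𝕂 : Type*} [RCLike 𝕂] {H : Type*} [NormedAddCommGroup H]
    [InnerProductSpace 𝕂 H] (P0 P1 X B : H →ₗ[𝕂] H) : H →ₗ[𝕂] H :=
  (P0 ∘ₗ (X ∘ₗ P0)) - (P0 ∘ₗ (X ∘ₗ P1)) ∘ₗ (B ∘ₗ (P1 ∘ₗ (X ∘ₗ P0)))

private lemma mp_aux {R : Type*} [Ring R] [StarRing R] (a b : R) (ha : star a = a)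
    (h1 : b * (a * b) = b) (h2 : a * (b * a) = a)
    (h3 : star (b * a) = b * a) (h4 : star (a * b) = a * b) :
    star b = b ∧ a * b = b * a := by
  have hiv : a * star b = b * a := by
    calc a * star b = star a * star b := by rw [ha]
    _ = star (b * a) := (star_mul b a).symm
    _ = b * a := h3
  have hv : star b * a = a * b := by
    calc star b * a = star b * star a := by rw [ha]
    _ = star (a * b) := (star_mul a b).symm
    _ = a * b := h4
  have mid : (a * star b) * a = a := by
    have h := congrArg star h2
    rwa [star_mul, star_mul, ha] at h
  have baa : (b * a) * a = a := by rw [← hiv]; exact mid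
  have aab : a * (a * b) = a := by
    calc a * (a * b) = a * (star b * a) := by rw [hv]
    _ = (a * star b) * a := by rw [← mul_assoc]
    _ = (b * a) * a := by rw [hiv]
    _ = a := baa
  have comm : a * b = b * a := by
    calc a * b = ((a * star b) * a) * b := by rw [mid]
    _ = (b * a) * (a * b) := by rw [hiv, mul_assoc]
    _ = b * (a * (a * b)) := by rw [mul_assoc]
    _ = b * a := by rw [aab]
  have hsb : star b = b := by
    have hcac : (a * b) * star b = star b := by
      have h := congrArg star h1
      rw [star_mul, h4] at h
      exact h
    calc star b = (a * b) * star b := hcac.symm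
    _ = (b * a) * star b := by rw [comm]
    _ = b * (a * star b) := by rw [mul_assoc]
    _ = b * (b * a) := by rw [hiv]
    _ = b * (a * b) := by rw [comm]
    _ = b := h1
  exact ⟨hsb, comm⟩

private lemma pos_ker {𝕂 : Type*} [RCLike 𝕂] {H : Type*} [NormedAddCommGroup H]
    [InnerProductSpace 𝕂 H] [FiniteDimensional 𝕂 H]
    (X : H →ₗ[𝕂] H) (hXsa : LinearMap.adjoint X = X)
    (hpos : ∀ x : H, 0 ≤ RCLike.re (inner 𝕂 x (X x) : 𝕂))
    (y : H) (hy : (inner 𝕂 y (X y) : 𝕂) = 0) : X y = 0 := by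
  set z := X y with hz
  have hXz : (inner 𝕂 y (X z) : 𝕂) = inner 𝕂 z z := by
    have h := LinearMap.adjoint_inner_left X z y
    rw [hXsa, ← hz] at h
    exact h.symm
  have key : ∀ t : ℝ, 0 ≤ 2*t*(RCLike.re (inner 𝕂 z z : 𝕂)) + t^2 * RCLike.re (inner 𝕂 z (X z) : 𝕂) := by
    intro t
    have h0 := hpos (y + (t:𝕂) • z)
    have hexp : (inner 𝕂 (y + (t:𝕂)•z) (X (y + (t:𝕂)•z)) : 𝕂)
        = ((2*t : ℝ) : 𝕂) * inner 𝕂 z z + ((t^2 : ℝ) : 𝕂) * inner 𝕂 z (X z) := by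
      rw [map_add, map_smul, ← hz]
      rw [inner_add_left, inner_add_right, inner_add_right,
        inner_smul_left, inner_smul_right, inner_smul_left, inner_smul_right]
      rw [hy, hXz, RCLike.conj_ofReal]
      push_cast
      ring
    rw [hexp, map_add, RCLike.re_ofReal_mul, RCLike.re_ofReal_mul] at h0
    linarith [h0]
  have hs : RCLike.re (inner 𝕂 z z : 𝕂) = ‖z‖^2 := inner_self_eq_norm_sq z
  set c0 := RCLike.re (inner 𝕂 z (X z) : 𝕂) with hc0
  have hc : 0 ≤ c0 := hpos z
  set s := ‖z‖^2 with hsdef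
  have hq := key (-(s/(c0+1)))
  rw [hs] at hq
  have h2 : 0 ≤ (2*(-(s/(c0+1)))*s + (-(s/(c0+1)))^2*c0) * ((c0+1)*(c0+1)) :=
    mul_nonneg hq (by positivity)
  have h3 : (2*(-(s/(c0+1)))*s + (-(s/(c0+1)))^2*c0) * ((c0+1)*(c0+1))
      = -2*s^2*(c0+1) + s^2*c0 := by
    have h4 : c0 + 1 ≠ 0 := by positivity
    field_simp
  rw [h3] at h2
  have hsle : s ≤ 0 := by nlinarith [sq_nonneg s]
  have hs0 : ‖z‖ = 0 := by
    have : ‖z‖^2 = 0 := le_antisymm hsle (by positivity)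
    nlinarith [norm_nonneg z, this]
  exact norm_eq_zero.mp hs0

/-- Aitken block-diagonalization conditions: for a self-adjoint operator
`X` on a finite-dimensional inner product space `H = H₀ ⊕ H₁` (orthogonal projections
`P0, P1`, blocks `Xᵢⱼ = Pᵢ X Pⱼ`), with `B = X₁₁⁺` the Moore–Penrose pseudoinverse of
`X₁₁`, the factorization
`X = [[I, (X₁₁⁺X₁₀)*],[0, I]]·[[X/X₁₁, 0],[0, X₁₁]]·[[I, 0],[X₁₁⁺X₁₀, I]]` holds if and
only if `ker X₁₁ ⊆ ker X₀₁`; and if moreover `X ≥ 0`, then the kernel inclusion and the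
factorization both hold. -/
theorem stmt_8
    {𝕂 : Type*} [RCLike 𝕂]
    {H : Type*} [NormedAddCommGroup H] [InnerProductSpace 𝕂 H] [FiniteDimensional 𝕂 H]
    (P0 P1 : H →ₗ[𝕂] H)
    (hP0 : P0 ∘ₗ P0 = P0) (hP0sa : LinearMap.adjoint P0 = P0)
    (hP1 : P1 ∘ₗ P1 = P1) (hP1sa : LinearMap.adjoint P1 = P1)
    (hsum : P0 + P1 = 1)
    (X : H →ₗ[𝕂] H) (hXsa : LinearMap.adjoint X = X)
    (B : H →ₗ[𝕂] H)
    (hB1 : B ∘ₗ ((P1 ∘ₗ (X ∘ₗ P1)) ∘ₗ B) = B)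
    (hB2 : (P1 ∘ₗ (X ∘ₗ P1)) ∘ₗ (B ∘ₗ (P1 ∘ₗ (X ∘ₗ P1))) = P1 ∘ₗ (X ∘ₗ P1))
    (hB3 : LinearMap.adjoint (B ∘ₗ (P1 ∘ₗ (X ∘ₗ P1))) = B ∘ₗ (P1 ∘ₗ (X ∘ₗ P1)))
    (hB4 : LinearMap.adjoint ((P1 ∘ₗ (X ∘ₗ P1)) ∘ₗ B) = (P1 ∘ₗ (X ∘ₗ P1)) ∘ₗ B) :
    ((X = (1 + LinearMap.adjoint (B ∘ₗ (P1 ∘ₗ (X ∘ₗ P0)))) ∘ₗ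
        (((gschurLM P0 P1 X B) + (P1 ∘ₗ (X ∘ₗ P1))) ∘ₗ
          (1 + B ∘ₗ (P1 ∘ₗ (X ∘ₗ P0))))) ↔
      LinearMap.ker (P1 ∘ₗ (X ∘ₗ P1)) ≤ LinearMap.ker (P0 ∘ₗ (X ∘ₗ P1))) ∧
    ((∀ x : H, 0 ≤ RCLike.re (inner 𝕂 x (X x) : 𝕂)) →
      (LinearMap.ker (P1 ∘ₗ (X ∘ₗ P1)) ≤ LinearMap.ker (P0 ∘ₗ (X ∘ₗ P1)) ∧
        X = (1 + LinearMap.adjoint (B ∘ₗ (P1 ∘ₗ (X ∘ₗ P0)))) ∘ₗ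
          (((gschurLM P0 P1 X B) + (P1 ∘ₗ (X ∘ₗ P1))) ∘ₗ
            (1 + B ∘ₗ (P1 ∘ₗ (X ∘ₗ P0)))))) := by
  simp only [gschurLM, ← Module.End.mul_eq_comp, ← LinearMap.star_eq_adjoint] at hB1 hB2 hB3 hB4 hP0 hP1 ⊢
  have hP0sa' : star P0 = P0 := by rw [LinearMap.star_eq_adjoint]; exact hP0sa
  have hP1sa' : star P1 = P1 := by rw [LinearMap.star_eq_adjoint]; exact hP1sa
  have hXsa' : star X = X := by rw [LinearMap.star_eq_adjoint]; exact hXsa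
  -- self-adjointness of the (1,1) block
  have hA : star (P1*(X*P1)) = P1*(X*P1) := by
    simp [star_mul, hP0sa', hP1sa', hXsa', mul_assoc]
  obtain ⟨hBstar, hcomm⟩ := mp_aux (P1*(X*P1)) B hA hB1 hB2 hB3 hB4
  -- projection facts
  have f01 : P0 * P1 = 0 := by
    linear_combination (norm := noncomm_ring) P0 * hsum - hP0
  have f10 : P1 * P0 = 0 := by
    linear_combination (norm := noncomm_ring) hsum * P0 - hP0
  have hA1 : (P1*(X*P1)) * P1 = P1*(X*P1) := by
    linear_combination (norm := noncomm_ring) (P1*X) * hP1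
  -- B absorbs P1
  have hbp1 : B * P1 = B := by
    linear_combination (norm := noncomm_ring)
      (-(hB1*P1)) + B*hcomm*P1 + (B*B)*hA1 - B*hcomm + hB1
  have hp1b : P1 * B = B := by
    have h := congrArg star hbp1
    rw [star_mul, hP1sa', hBstar] at h
    exact h
  have hp0b : P0 * B = 0 := by rw [← hp1b, ← mul_assoc, f01, zero_mul]
  have hbp0 : B * P0 = 0 := by rw [← hbp1, mul_assoc, f10, mul_zero]
  -- star of off-diagonal block
  have hstar01 : star (P0*(X*P1)) = P1*(X*P0) := by
    simp [star_mul, hP0sa', hP1sa', hXsa', mul_assoc]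
  have hadj : star (B*(P1*(X*P0))) = (P0*(X*P1))*B := by
    simp [star_mul, hP0sa', hP1sa', hXsa', hBstar, mul_assoc]
  rw [hadj]
  -- expansion of the triple product
  have expand : (1 + (P0*(X*P1))*B) * (((P0*(X*P0) - (P0*(X*P1))*(B*(P1*(X*P0)))) + P1*(X*P1)) * (1 + B*(P1*(X*P0))))
      = P0*(X*P0) + P1*(X*P1) + (P1*(X*P1))*(B*(P1*(X*P0))) + (P0*(X*P1))*(B*(P1*(X*P1))) := by
    linear_combination (norm := noncomm_ring)
      (P0*X) * hp0b * (P1*(X*P0))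
      - (P0*(X*P1))*(B*(P1*X)) * hp0b * (P1*(X*P0))
      + (P0*(X*P1)) * hbp0 * (X*P0)
      - (P0*(X*P1)) * hbp0 * ((X*P1)*(B*(P1*(X*P0))))
      + (P0*(X*P1)) * hbp0 * ((X*P0)*(B*(P1*(X*P0))))
      - (P0*(X*P1)) * hbp0 * ((X*P1)*(B*(P1*(X*P0)))*(B*(P1*(X*P0))))
      + (P0*(X*P1)) * hB1 * (P1*(X*P0))
  have hbwd : LinearMap.ker (P1*(X*P1)) ≤ LinearMap.ker (P0*(X*P1)) →
      X = (1 + (P0*(X*P1))*B) * ((P0*(X*P0) - (P0*(X*P1))*(B*(P1*(X*P0))) + P1*(X*P1)) * (1 + B*(P1*(X*P0)))) := by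
    intro hker
    have hxba : (P0*(X*P1))*(B*(P1*(X*P1))) = P0*(X*P1) := by
      apply LinearMap.ext; intro v
      have h0 : (P1*(X*P1)) (v - B ((P1*(X*P1)) v)) = 0 := by
        have h2v : (P1*(X*P1)) (B ((P1*(X*P1)) v)) = (P1*(X*P1)) v := by
          have h := LinearMap.ext_iff.mp hB2 v
          simpa [Module.End.mul_apply] using h
        rw [map_sub, h2v, sub_self]
      have h1 := hker (LinearMap.mem_ker.mpr h0)
      rw [LinearMap.mem_ker, map_sub, sub_eq_zero] at h1
      simpa [Module.End.mul_apply] using h1.symm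
    have habx : (P1*(X*P1))*(B*(P1*(X*P0))) = P1*(X*P0) := by
      have h := congrArg star hxba
      rw [star_mul, hB3, hstar01] at h
      linear_combination (norm := noncomm_ring) h + hcomm * (P1*(X*P0))
    linear_combination (norm := noncomm_ring)
      (-expand) - habx - hxba - hsum*(X*(P0+P1)) - X*hsum
  have hfwd : X = (1 + (P0*(X*P1))*B) * ((P0*(X*P0) - (P0*(X*P1))*(B*(P1*(X*P0))) + P1*(X*P1)) * (1 + B*(P1*(X*P0)))) →
      LinearMap.ker (P1*(X*P1)) ≤ LinearMap.ker (P0*(X*P1)) := by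
    intro hEq
    have key : (P0*(X*P1))*(B*(P1*(X*P1))) = P0*(X*P1) := by
      linear_combination (norm := noncomm_ring)
        (-(P0*hEq*P1)) - P0*expand*P1
        - (P0*(P0*X))*f01
        - f01*(X*(P1*P1))
        - (P0*(P1*(X*P1))*(B*(P1*X)))*f01
        - hP0 * (X*(P1*(B*(P1*(X*(P1*P1))))))
        - (P0*(X*(P1*(B*(P1*X)))))*hP1
    intro v hv
    rw [LinearMap.mem_ker] at hv ⊢
    rw [← key]
    simp only [Module.End.mul_apply] at hv ⊢
    simp only [hv, map_zero]
  have hker_of_pos : (∀ x : H, 0 ≤ RCLike.re (inner 𝕂 x (X x) : 𝕂)) →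
      LinearMap.ker (P1*(X*P1)) ≤ LinearMap.ker (P0*(X*P1)) := by
    intro hpos v hv
    rw [LinearMap.mem_ker] at hv ⊢
    have hinner : (inner 𝕂 (P1 v) (X (P1 v)) : 𝕂) = 0 := by
      have h := LinearMap.adjoint_inner_left P1 (X (P1 v)) v
      rw [hP1sa] at h
      have hz : P1 (X (P1 v)) = 0 := by simpa [Module.End.mul_apply] using hv
      rw [h, hz, inner_zero_right]
    have hXy := pos_ker X hXsa hpos (P1 v) hinner
    simp [Module.End.mul_apply, hXy]
  exact ⟨⟨hfwd, hbwd⟩, fun hpos => ⟨hker_of_pos hpos, hbwd (hker_of_pos hpos)⟩⟩
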